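/- Let k be a field, let R = k[x_0,…,x_r], and let d be a positive integer. Let m ∈ R be a monomial, let J ⊆ R be a monomial ideal, let 0 ≤ i ≤ r, let s be a positive integer, and let n ∈ R be a monomial not divisible by x_i. Set I = (x_i^s·n) + J. Then M(m, I) is the disjoint union of M(lcm(x_i^s, m), (n) + J) and M(m, (x_i^s) + J); that is, these two sets are disjoint and their union is M(m, I). -/

import Mathlib

open MvPolynomial

/-- `MSet d m I` is the set of (monic) monomials that are divisible by `m` (i.e. lie in the
principal ideal `(m)`), do not lie in `I`, and do not lie in the ideal
`(x_0^d, …, x_r^d)` generated by the `d`-th powers of the variables. -/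
def MSet {k σ : Type*} [CommSemiring k] (d : ℕ) (m : MvPolynomial σ k)
    (I : Ideal (MvPolynomial σ k)) : Set (MvPolynomial σ k) :=
  {u | (∃ e : σ →₀ ℕ, u = monomial e 1) ∧ u ∈ Ideal.span {m} ∧ u ∉ I ∧
    u ∉ Ideal.span (Set.range fun j : σ => (X j : MvPolynomial σ k) ^ d)}

lemma mono_mem_span_image_iff {k σ : Type*} [Field k] (e : σ →₀ ℕ) (S : Set (σ →₀ ℕ)) :
    (monomial e 1 : MvPolynomial σ k) ∈
      Ideal.span ((fun b => (monomial b 1 : MvPolynomial σ k)) '' S) ↔ ∃ b ∈ S, b ≤ e := by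
  classical
  rw [mem_ideal_span_monomial_image]
  constructor
  · intro h
    exact h e (by simp [mem_support_iff, coeff_monomial])
  · intro h xi hxi
    rw [mem_support_iff, coeff_monomial] at hxi
    rcases h with ⟨b, hb, hbe⟩
    have he : e = xi := by by_contra hne; simp [hne] at hxi
    exact ⟨b, hb, he ▸ hbe⟩

theorem stmt2 {k : Type*} [Field k] (r d : ℕ) (hd : 0 < d)
    (a : Fin (r + 1) →₀ ℕ)
    (J : Ideal (MvPolynomial (Fin (r + 1)) k))
    (hJ : ∃ S : Set (Fin (r + 1) →₀ ℕ),
      J = Ideal.span ((fun e => (monomial e 1 : MvPolynomial (Fin (r + 1)) k)) '' S))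
    (i : Fin (r + 1)) (s : ℕ) (hs : 0 < s)
    (c : Fin (r + 1) →₀ ℕ) (hc : c i = 0)
    (I : Ideal (MvPolynomial (Fin (r + 1)) k))
    (hI : I = Ideal.span {(X i ^ s * monomial c 1 : MvPolynomial (Fin (r + 1)) k)} + J) :
    Disjoint
      (MSet d (monomial (a ⊔ Finsupp.single i s) 1) (Ideal.span {(monomial c 1 : MvPolynomial (Fin (r + 1)) k)} + J))
      (MSet d (monomial a 1) (Ideal.span {(X i ^ s : MvPolynomial (Fin (r + 1)) k)} + J)) ∧
    MSet d (monomial (a ⊔ Finsupp.single i s) 1) (Ideal.span {(monomial c 1 : MvPolynomial (Fin (r + 1)) k)} + J) ∪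
      MSet d (monomial a 1) (Ideal.span {(X i ^ s : MvPolynomial (Fin (r + 1)) k)} + J) =
      MSet d (monomial a 1) I := by
  classical
  obtain ⟨S, hS⟩ := hJ
  have hXs : (X i ^ s : MvPolynomial (Fin (r + 1)) k) = monomial (Finsupp.single i s) 1 :=
    X_pow_eq_monomial
  have hprod : (X i ^ s * monomial c 1 : MvPolynomial (Fin (r + 1)) k)
      = monomial (Finsupp.single i s + c) 1 := by
    rw [hXs, monomial_mul, one_mul]
  -- membership in a principal monomial ideal
  have hspan1 : ∀ b e : Fin (r + 1) →₀ ℕ,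
      (monomial e 1 : MvPolynomial (Fin (r + 1)) k) ∈
        Ideal.span {(monomial b 1 : MvPolynomial (Fin (r + 1)) k)} ↔ b ≤ e := by
    intro b e
    have : ({(monomial b 1 : MvPolynomial (Fin (r + 1)) k)} : Set _)
        = (fun e => (monomial e 1 : MvPolynomial (Fin (r + 1)) k)) '' {b} := by
      simp
    rw [this, mono_mem_span_image_iff]
    simp
  -- membership in (monomial b) + J
  have hsum : ∀ b e : Fin (r + 1) →₀ ℕ,
      (monomial e 1 : MvPolynomial (Fin (r + 1)) k) ∈
        Ideal.span {(monomial b 1 : MvPolynomial (Fin (r + 1)) k)} + J ↔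
        (b ≤ e ∨ ∃ b' ∈ S, b' ≤ e) := by
    intro b e
    have h1 : Ideal.span {(monomial b 1 : MvPolynomial (Fin (r + 1)) k)} + J
        = Ideal.span ((fun e => (monomial e 1 : MvPolynomial (Fin (r + 1)) k)) '' insert b S) := by
      rw [hS, Set.image_insert_eq, Ideal.span_insert, ← Submodule.add_eq_sup]
    rw [h1, mono_mem_span_image_iff]
    simp
  -- membership in the power ideal
  have hpow : Ideal.span (Set.range fun j : Fin (r + 1) => (X j : MvPolynomial (Fin (r + 1)) k) ^ d)
      = Ideal.span ((fun e => (monomial e 1 : MvPolynomial (Fin (r + 1)) k)) ''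
          Set.range (fun j : Fin (r + 1) => Finsupp.single j d)) := by
    congr 1
    rw [← Set.range_comp]
    ext u
    simp [Function.comp, X_pow_eq_monomial]
  -- key arithmetic fact on exponents
  have hkey : ∀ e : Fin (r + 1) →₀ ℕ,
      Finsupp.single i s + c ≤ e ↔ s ≤ e i ∧ c ≤ e := by
    intro e
    constructor
    · intro h
      refine ⟨?_, le_trans ?_ h⟩
      · have := Finsupp.le_def.mp h i
        simpa [hc] using this
      · exact le_add_self
    · rintro ⟨h1, h2⟩
      rw [Finsupp.le_def]
      intro j
      by_cases hj : j = i
      · subst hj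
        simpa [hc] using h1
      · have : Finsupp.single i s j = 0 := Finsupp.single_eq_of_ne' (Ne.symm hj)
        simp only [Finsupp.add_apply, this, zero_add]
        exact Finsupp.le_def.mp h2 j
  constructor
  · rw [Set.disjoint_left]
    rintro u ⟨⟨e, rfl⟩, hm, hnot, hp⟩ ⟨-, -, hnot', -⟩
    apply hnot'
    rw [hXs, hsum]
    left
    have := (hspan1 _ _).mp hm
    exact le_trans le_sup_right this
  · ext u
    constructor
    · rintro (⟨⟨e, rfl⟩, hm, hnot, hp⟩ | ⟨⟨e, rfl⟩, hm, hnot, hp⟩)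
      · refine ⟨⟨e, rfl⟩, ?_, ?_, hp⟩
        · rw [hspan1]
          exact le_trans le_sup_left ((hspan1 _ _).mp hm)
        · rw [hI, hprod, hsum]
          rw [hsum] at hnot
          rintro (h | h)
          · exact hnot (Or.inl ((hkey e).mp h).2)
          · exact hnot (Or.inr h)
      · refine ⟨⟨e, rfl⟩, hm, ?_, hp⟩
        rw [hI, hprod, hsum]
        rw [hXs, hsum] at hnot
        rintro (h | h)
        · refine hnot (Or.inl ?_)
          rw [Finsupp.single_le_iff]
          exact ((hkey e).mp h).1
        · exact hnot (Or.inr h)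
    · rintro ⟨⟨e, rfl⟩, hm, hnot, hp⟩
      rw [hI, hprod, hsum] at hnot
      push_neg at hnot
      obtain ⟨h1, h2⟩ := hnot
      have ha : a ≤ e := (hspan1 _ _).mp hm
      by_cases hsi : s ≤ e i
      · left
        refine ⟨⟨e, rfl⟩, ?_, ?_, hp⟩
        · rw [hspan1]
          exact sup_le ha (Finsupp.single_le_iff.mpr hsi)
        · rw [hsum]
          rintro (h | h)
          · exact h1 ((hkey e).mpr ⟨hsi, h⟩)
          · obtain ⟨b, hb, hbe⟩ := h
            exact h2 b hb hbe
      · right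
        refine ⟨⟨e, rfl⟩, hm, ?_, hp⟩
        rw [hXs, hsum]
        rintro (h | h)
        · exact hsi (Finsupp.single_le_iff.mp h)
        · obtain ⟨b, hb, hbe⟩ := h
          exact h2 b hb hbe
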